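/- For any cost function f and any m ≥ 1, Opt(u, m) computed by the dynamic-programming recurrence (Opt(u, k+1) = min over dividers i of Opt(u[0,i), k) + Opt(u[i,|u|), 1), with base case Opt(u,1) = min of f over nonempty contiguous substrings of u) equals the true minimum total cost over all placements of m disjoint ordered seeds in u. In particular the dynamic program is correct. -/

import Mathlib

/-- A placement of seeds in a string `u`: a list of intervals `(a, b)` denoting positions
`[a, b)`, each nonempty, within bounds, pairwise disjoint and in order. -/
def ValidPlacement {α : Type*} (u : List α) (ivs : List (ℕ × ℕ)) : Prop :=
  (∀ p ∈ ivs, p.1 < p.2 ∧ p.2 ≤ u.length) ∧ ivs.Chain' (fun p q => p.2 ≤ q.1)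

/-- The total frequency (cost) of a placement: the sum of `f` over the substrings of `u`
cut out by the intervals. -/
def cost {α : Type*} (f : List α → ℕ) (u : List α) (ivs : List (ℕ × ℕ)) : ℕ :=
  (ivs.map fun p => f ((u.drop p.1).take (p.2 - p.1))).sum

/-- `Opt f u m`: the optimal (minimum) total cost over all placements of `m` seeds in `u`. -/
noncomputable def Opt {α : Type*} (f : List α → ℕ) (u : List α) (m : ℕ) : ℕ :=
  sInf {c | ∃ ivs, ivs.length = m ∧ ValidPlacement u ivs ∧ c = cost f u ivs}

/-- `Opt1 f u`: the minimum of `f` over all nonempty contiguous substrings of `u`. -/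
noncomputable def Opt1 {α : Type*} (f : List α → ℕ) (u : List α) : ℕ :=
  sInf {c | ∃ a b : ℕ, a < b ∧ b ≤ u.length ∧ c = f ((u.drop a).take (b - a))}

/-- The dynamic program: `OptRec f 1 u` is the minimum of `f` over nonempty contiguous
substrings of `u`, and `OptRec f (k+1) u` is the minimum over dividers `i` of
`OptRec f k (u[0,i)) + Opt1 f (u[i,|u|))`. -/
noncomputable def OptRec {α : Type*} (f : List α → ℕ) : ℕ → List α → ℕ
  | 0, _ => 0
  | 1, u => Opt1 f u
  | k + 2, u =>
      sInf {c | ∃ i, k + 1 ≤ i ∧ i < u.length ∧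
        c = OptRec f (k + 1) (u.take i) + Opt1 f (u.drop i)}

namespace OptRecAux

open List

variable {α : Type*}

lemma chain'_pairwise : ∀ {ivs : List (ℕ × ℕ)}, (∀ p ∈ ivs, p.1 < p.2) →
    ivs.Chain' (fun p q => p.2 ≤ q.1) → ivs.Pairwise (fun p q => p.2 ≤ q.1) := by
  intro ivs
  induction ivs with
  | nil => intro _ _; simp
  | cons p rest ih =>
    intro hv hc
    unfold List.Chain' at hc
    rw [List.isChain_cons] at hc
    have hrest := ih (fun q hq => hv q (by simp [hq])) hc.2
    refine List.pairwise_cons.2 ⟨?_, hrest⟩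
    intro q hq
    cases rest with
    | nil => simp at hq
    | cons r rest' =>
      have h1 : p.2 ≤ r.1 := hc.1 r rfl
      rcases List.mem_cons.1 hq with rfl | hq'
      · exact h1
      · have h2 := (List.pairwise_cons.1 hrest).1 q hq'
        have h3 := hv r (by simp)
        omega

lemma length_le : ∀ (ivs : List (ℕ × ℕ)) (m n : ℕ), (∀ p ∈ ivs, p.1 < p.2) →
    ivs.Pairwise (fun p q => p.2 ≤ q.1) → (∀ p ∈ ivs, m ≤ p.1) →
    (∀ p ∈ ivs, p.2 ≤ n) → ivs.length ≤ n - m := by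
  intro ivs
  induction ivs with
  | nil => intros; simp
  | cons p rest ih =>
    intro m n hv hp hlo hhi
    have hpr := List.pairwise_cons.1 hp
    have hrec := ih p.2 n (fun q hq => hv q (by simp [hq])) hpr.2
      (fun q hq => hpr.1 q hq) (fun q hq => hhi q (by simp [hq]))
    have h1 := hv p (by simp)
    have h2 := hhi p (by simp)
    have h3 := hlo p (by simp)
    simp only [List.length_cons]
    omega

lemma cost_take (f : List α → ℕ) (u : List α) (i : ℕ) (ivs : List (ℕ × ℕ))
    (h : ∀ p ∈ ivs, p.2 ≤ i) : cost f (u.take i) ivs = cost f u ivs := by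
  unfold cost
  congr 1
  apply List.map_congr_left
  intro p hp
  congr 1
  rw [List.drop_take, List.take_take]
  congr 1
  have := h p hp
  omega

lemma optSet_nonempty (f : List α → ℕ) (u : List α) (m : ℕ) (h : m ≤ u.length) :
    {c | ∃ ivs, ivs.length = m ∧ ValidPlacement u ivs ∧ c = cost f u ivs}.Nonempty := by
  refine ⟨_, (List.range m).map (fun j => (j, j + 1)), by simp, ⟨?_, ?_⟩, rfl⟩
  · intro p hp
    simp only [List.mem_map, List.mem_range] at hp
    obtain ⟨j, hj, rfl⟩ := hp
    exact ⟨by omega, by omega⟩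
  · apply List.Pairwise.isChain
    rw [List.pairwise_map]
    exact List.Pairwise.imp (fun h => h) (List.pairwise_lt_range (n := m))

lemma opt1Set_nonempty (f : List α → ℕ) (u : List α) (h : 1 ≤ u.length) :
    {c | ∃ a b : ℕ, a < b ∧ b ≤ u.length ∧ c = f ((u.drop a).take (b - a))}.Nonempty :=
  ⟨_, 0, 1, by omega, h, rfl⟩

lemma opt_one (f : List α → ℕ) (u : List α) : Opt f u 1 = Opt1 f u := by
  unfold Opt Opt1
  congr 1
  ext c
  constructor
  · rintro ⟨ivs, hlen, ⟨hb, hc⟩, rfl⟩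
    obtain ⟨p, rfl⟩ := List.length_eq_one_iff.1 hlen
    obtain ⟨h1, h2⟩ := hb p (by simp)
    exact ⟨p.1, p.2, h1, h2, by simp [cost]⟩
  · rintro ⟨a, b, h1, h2, rfl⟩
    refine ⟨[(a, b)], rfl, ⟨?_, List.isChain_singleton _⟩, by simp [cost]⟩
    intro p hp
    simp only [List.mem_singleton] at hp
    subst hp
    exact ⟨h1, h2⟩

lemma sInf_le_sInf_of {S T : Set ℕ} (hT : T.Nonempty) (h : ∀ t ∈ T, ∃ s ∈ S, s ≤ t) :
    sInf S ≤ sInf T := by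
  have ht := Nat.sInf_mem hT
  obtain ⟨s, hs, hle⟩ := h _ ht
  exact le_trans (Nat.sInf_le hs) hle

end OptRecAux

/-- Correctness of the dynamic program: for any cost function `f` and any `m ≥ 1` with
`m ≤ |u|`, the value computed by the divider recurrence equals the true minimum total cost
over all placements of `m` disjoint ordered seeds in `u`. -/
theorem optRec_correct {α : Type*} (f : List α → ℕ) (u : List α) (m : ℕ)
    (hm : 1 ≤ m) (hlen : m ≤ u.length) :
    OptRec f m u = Opt f u m := by
  open OptRecAux in
  induction m using Nat.strong_induction_on generalizing u with
  | _ m ih => ?_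
  match m, hm with
  | 1, _ =>
    simp only [OptRec]
    exact (OptRecAux.opt_one f u).symm
  | k + 2, _ =>
    have hlen2 : k + 2 ≤ u.length := hlen
    have hrec : ∀ i, k + 1 ≤ i → i < u.length →
        OptRec f (k + 1) (u.take i) = Opt f (u.take i) (k + 1) := by
      intro i h1 h2
      exact ih (k + 1) (by omega) (u.take i) (by omega) (by rw [List.length_take]; omega)
    simp only [OptRec]
    rw [show Opt f u (k + 2) = sInf {c | ∃ ivs, ivs.length = k + 2 ∧ ValidPlacement u ivs
      ∧ c = cost f u ivs} from rfl]
    apply le_antisymm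
    · apply OptRecAux.sInf_le_sInf_of (OptRecAux.optSet_nonempty f u (k + 2) hlen2)
      rintro t ⟨ivs, hl, ⟨hbd, hch⟩, rfl⟩
      have hne : ivs ≠ [] := by intro h; simp [h] at hl
      obtain ⟨ivs', p, rfl⟩ : ∃ ivs' p, ivs = ivs' ++ [p] :=
        ⟨ivs.dropLast, ivs.getLast hne, (List.dropLast_append_getLast hne).symm⟩
      obtain ⟨a, b⟩ := p
      have hl' : ivs'.length = k + 1 := by simpa using hl
      obtain ⟨hab1, hab2⟩ := hbd (a, b) (by simp)
      have hpw := OptRecAux.chain'_pairwise (fun p hp => (hbd p hp).1) hch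
      obtain ⟨hpw1, _, hpw3⟩ := List.pairwise_append.1 hpw
      have hmem2 : ∀ p ∈ ivs', p.2 ≤ a := fun p hp => hpw3 p hp (a, b) (by simp)
      have hka : k + 1 ≤ a := by
        have := OptRecAux.length_le ivs' 0 a (fun p hp => (hbd p (List.mem_append_left _ hp)).1)
          hpw1 (fun p _ => Nat.zero_le _) hmem2
        omega
      have ha_lt : a < u.length := by omega
      refine ⟨Opt f (u.take a) (k + 1) + Opt1 f (u.drop a),
        ⟨a, hka, ha_lt, by rw [hrec a hka ha_lt]⟩, ?_⟩
      have hc1 : cost f u (ivs' ++ [(a, b)]) = cost f u ivs' + f ((u.drop a).take (b - a)) := by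
        simp [cost]
      rw [hc1]
      apply add_le_add
      · rw [← OptRecAux.cost_take f u a ivs' hmem2]
        apply Nat.sInf_le
        refine ⟨ivs', hl', ⟨?_, (List.isChain_append.1 hch).1⟩, rfl⟩
        intro p hp
        refine ⟨(hbd p (List.mem_append_left _ hp)).1, ?_⟩
        rw [List.length_take]
        have := hmem2 p hp
        omega
      · apply Nat.sInf_le
        exact ⟨0, b - a, by omega, by rw [List.length_drop]; omega, by simp⟩
    · apply OptRecAux.sInf_le_sInf_of
      · exact ⟨_, k + 1, le_refl _, by omega, rfl⟩
      rintro t ⟨i, hi1, hi2, rfl⟩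
      rw [hrec i hi1 hi2]
      have h1 : (u.take i).length = i := by rw [List.length_take]; omega
      have hT1 := OptRecAux.optSet_nonempty f (u.take i) (k + 1) (by omega)
      have hT2 := OptRecAux.opt1Set_nonempty f (u.drop i) (by rw [List.length_drop]; omega)
      obtain ⟨ivs, hlv, ⟨hbd, hch⟩, hcost⟩ := Nat.sInf_mem hT1
      obtain ⟨a, b, hab1, hab2, hval⟩ := Nat.sInf_mem hT2
      rw [List.length_drop] at hab2
      refine ⟨_, ⟨ivs ++ [(i + a, i + b)], by simp [hlv], ⟨?_, ?_⟩, rfl⟩, ?_⟩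
      · intro p hp
        rcases List.mem_append.1 hp with hp | hp
        · obtain ⟨hp1, hp2⟩ := hbd p hp
          rw [h1] at hp2
          exact ⟨hp1, by omega⟩
        · simp only [List.mem_singleton] at hp
          subst hp
          exact ⟨by omega, by omega⟩
      · unfold List.Chain'
        rw [List.isChain_append]
        refine ⟨hch, List.isChain_singleton _, ?_⟩
        intro x hx y hy
        simp only [List.head?_cons, Option.mem_some_iff] at hy
        subst hy
        have hxmem : x ∈ ivs := List.mem_of_mem_getLast? hx
        have := (hbd x hxmem).2
        rw [h1] at this
        show x.2 ≤ i + a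
        omega
      · unfold Opt Opt1
        rw [hcost, hval]
        apply le_of_eq
        have e1 : cost f u ivs = cost f (u.take i) ivs :=
          (OptRecAux.cost_take f u i ivs (fun p hp => by
            have := (hbd p hp).2; rwa [h1] at this)).symm
        have e2 : (u.drop (i + a)).take ((i + b) - (i + a)) = ((u.drop i).drop a).take (b - a) := by
          rw [List.drop_drop]
          congr 1
          omega
        simp only [cost, List.map_append, List.sum_append, List.map_cons, List.map_nil,
          List.sum_cons, List.sum_nil]
        rw [← cost, ← cost, e1, e2]
        omega
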